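/- If f : I → ℝ solves the restricted Cauchy equation f(x+x') = f(x) + f(x') for all x, x', x+x' ∈ I, and f is monotone, then there exists c ∈ ℝ such that f(x) = c·x for all x ∈ I. -/

import Mathlib

lemma aux_mono (I : Set ℝ) (hI : I.OrdConnected)
    (h0 : (0 : ℝ) ∈ I) (hnt : ∃ x ∈ I, x ≠ 0) (f : ℝ → ℝ)
    (hadd : ∀ x ∈ I, ∀ x' ∈ I, x + x' ∈ I → f (x + x') = f x + f x')
    (hmono : MonotoneOn f I) :
    ∃ c : ℝ, ∀ x ∈ I, f x = c * x := by
  have hmem : ∀ v ∈ I, ∀ s : ℝ, 0 ≤ s → s ≤ 1 → s * v ∈ I := by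
    intro v hv s hs0 hs1
    rcases le_total 0 v with h | h
    · exact hI.out h0 hv ⟨by positivity, by nlinarith⟩
    · exact hI.out hv h0 ⟨by nlinarith, by nlinarith⟩
  have hf0 : f 0 = 0 := by
    have := hadd 0 h0 0 h0 (by simpa using h0)
    simp at this; linarith
  -- natural multiples
  have hnat : ∀ v ∈ I, ∀ n : ℕ, 0 < n → ∀ k : ℕ, k ≤ n →
      f (k * (v / n)) = k * f (v / n) := by
    intro v hv n hn k
    induction k with
    | zero => intro _; simpa using hf0
    | succ k ih =>
      intro hk
      have hk' : k ≤ n := Nat.le_of_succ_le hk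
      have hmem' : ∀ j : ℕ, j ≤ n → (j : ℝ) * (v / n) ∈ I := by
        intro j hj
        have : (j : ℝ) * (v / n) = ((j : ℝ) / n) * v := by ring
        rw [this]
        exact hmem v hv _ (by positivity) (by
          rw [div_le_one (by exact_mod_cast hn)]
          exact_mod_cast hj)
      have h1 : (k : ℝ) * (v / n) ∈ I := hmem' k hk'
      have h2 : (1 : ℝ) * (v / n) ∈ I := by
        have := hmem' 1 (by omega); simpa using this
      have h3 : ((k : ℝ) + 1) * (v / n) ∈ I := by
        have := hmem' (k + 1) hk; push_cast at this; convert this using 2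
      have := hadd _ h1 _ (by simpa using h2) (by rw [← add_one_mul]; exact h3)
      push_cast
      rw [add_one_mul, this, ih hk']
      ring
  -- rational multiples
  have hrat : ∀ v ∈ I, ∀ q : ℚ, 0 ≤ q → q ≤ 1 → f (q * v) = q * f v := by
    intro v hv q hq0 hq1
    have hden : 0 < (q.den : ℕ) := q.pos
    have hnum : 0 ≤ q.num := Rat.num_nonneg.mpr hq0
    set k : ℕ := q.num.toNat with hk
    have hq : (q : ℝ) = (k : ℝ) / (q.den : ℝ) := by
      rw [Rat.cast_def q, hk]
      congr 1
      exact_mod_cast (Int.toNat_of_nonneg hnum).symm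
    have hkn : k ≤ q.den := by
      have h' : (q.num : ℚ) ≤ (q.den : ℚ) := by
        have hd : (0 : ℚ) < (q.den : ℚ) := by exact_mod_cast q.pos
        rw [← Rat.num_div_den q, div_le_one hd] at hq1
        exact hq1
      have : q.num ≤ (q.den : ℤ) := by exact_mod_cast h'
      omega
    have h1 := hnat v hv q.den hden k hkn
    have h2 := hnat v hv q.den hden q.den le_rfl
    have hvd : (q.den : ℝ) * (v / q.den) = v := by
      field_simp
    rw [hvd] at h2
    rw [hq]
    have : (k : ℝ) / q.den * v = (k : ℝ) * (v / q.den) := by ring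
    rw [this, h1, h2]
    field_simp
  -- real scalar multiples in [0,1]
  have hs : ∀ v ∈ I, ∀ s : ℝ, 0 ≤ s → s ≤ 1 → f (s * v) = s * f v := by
    intro v hv s hs0 hs1
    rcases eq_or_lt_of_le hs0 with h | hs0'
    · rw [← h]; simpa using hf0
    rcases eq_or_lt_of_le hs1 with h | hs1'
    · rw [h]; simp
    have hsv : s * v ∈ I := hmem v hv s hs0 hs1
    rcases le_total 0 v with hv0 | hv0
    · have hF : 0 ≤ f v := by
        have := hmono h0 hv hv0
        rwa [hf0] at this
      apply le_antisymm
      · apply le_of_forall_pos_le_add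
        intro ε hε
        set δ := ε / (f v + 1) with hδdef
        have hδ : 0 < δ := div_pos hε (by linarith)
        obtain ⟨q, hq1, hq2⟩ := exists_rat_btwn (lt_min hs1' (by linarith : s < s + δ))
        have hq2a : (q : ℝ) < 1 := lt_of_lt_of_le hq2 (min_le_left _ _)
        have hq2b : (q : ℝ) < s + δ := lt_of_lt_of_le hq2 (min_le_right _ _)
        have hq0 : (0 : ℝ) ≤ q := le_of_lt (lt_of_le_of_lt hs0 hq1)
        have h1 : f (s * v) ≤ f ((q : ℝ) * v) :=
          hmono hsv (hmem v hv q hq0 hq2a.le) (mul_le_mul_of_nonneg_right hq1.le hv0)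
        have h2 : f ((q : ℝ) * v) = q * f v :=
          hrat v hv q (by exact_mod_cast hq0) (by exact_mod_cast hq2a.le)
        have hδe : δ * (f v + 1) = ε := div_mul_cancel₀ _ (by linarith)
        nlinarith [mul_le_mul_of_nonneg_right hq2b.le hF]
      · apply le_of_forall_pos_le_add
        intro ε hε
        set δ := ε / (f v + 1) with hδdef
        have hδ : 0 < δ := div_pos hε (by linarith)
        obtain ⟨q, hq1, hq2⟩ := exists_rat_btwn (max_lt hs0' (by linarith : s - δ < s))
        have hq1a : (0 : ℝ) < q := lt_of_le_of_lt (le_max_left _ _) hq1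
        have hq1b : s - δ < q := lt_of_le_of_lt (le_max_right _ _) hq1
        have h1 : f ((q : ℝ) * v) ≤ f (s * v) :=
          hmono (hmem v hv q hq1a.le (by linarith)) hsv
            (mul_le_mul_of_nonneg_right hq2.le hv0)
        have h2 : f ((q : ℝ) * v) = q * f v :=
          hrat v hv q (by exact_mod_cast hq1a.le)
            (by exact_mod_cast (by linarith : (q : ℝ) ≤ 1))
        have hδe : δ * (f v + 1) = ε := div_mul_cancel₀ _ (by linarith)
        nlinarith [mul_le_mul_of_nonneg_right hq1b.le hF]
    · have hF : f v ≤ 0 := by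
        have := hmono hv h0 hv0
        rwa [hf0] at this
      apply le_antisymm
      · apply le_of_forall_pos_le_add
        intro ε hε
        set δ := ε / (1 - f v) with hδdef
        have hδ : 0 < δ := div_pos hε (by linarith)
        obtain ⟨q, hq1, hq2⟩ := exists_rat_btwn (max_lt hs0' (by linarith : s - δ < s))
        have hq1a : (0 : ℝ) < q := lt_of_le_of_lt (le_max_left _ _) hq1
        have hq1b : s - δ < q := lt_of_le_of_lt (le_max_right _ _) hq1
        have h1 : f (s * v) ≤ f ((q : ℝ) * v) :=
          hmono hsv (hmem v hv q hq1a.le (by linarith))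
            (by nlinarith)
        have h2 : f ((q : ℝ) * v) = q * f v :=
          hrat v hv q (by exact_mod_cast hq1a.le)
            (by exact_mod_cast (by linarith : (q : ℝ) ≤ 1))
        have hδe : δ * (1 - f v) = ε := div_mul_cancel₀ _ (by linarith)
        nlinarith [mul_le_mul_of_nonpos_right hq1b.le hF]
      · apply le_of_forall_pos_le_add
        intro ε hε
        set δ := ε / (1 - f v) with hδdef
        have hδ : 0 < δ := div_pos hε (by linarith)
        obtain ⟨q, hq1, hq2⟩ := exists_rat_btwn (lt_min hs1' (by linarith : s < s + δ))
        have hq2a : (q : ℝ) < 1 := lt_of_lt_of_le hq2 (min_le_left _ _)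
        have hq2b : (q : ℝ) < s + δ := lt_of_lt_of_le hq2 (min_le_right _ _)
        have hq0 : (0 : ℝ) ≤ q := le_of_lt (lt_of_le_of_lt hs0 hq1)
        have h1 : f ((q : ℝ) * v) ≤ f (s * v) :=
          hmono (hmem v hv q hq0 hq2a.le) hsv (by nlinarith)
        have h2 : f ((q : ℝ) * v) = q * f v :=
          hrat v hv q (by exact_mod_cast hq0) (by exact_mod_cast hq2a.le)
        have hδe : δ * (1 - f v) = ε := div_mul_cancel₀ _ (by linarith)
        nlinarith [mul_le_mul_of_nonpos_right hq2b.le hF]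
  -- assembly
  by_cases hp : ∃ p ∈ I, 0 < p
  · obtain ⟨p, hpI, hp0⟩ := hp
    refine ⟨f p / p, ?_⟩
    intro x hx
    rcases le_or_gt 0 x with hx0 | hx0
    · rcases le_total x p with hxy | hxy
      · have h := hs p hpI (x / p) (by positivity) (by rw [div_le_one hp0]; exact hxy)
        rw [div_mul_cancel₀ _ (ne_of_gt hp0)] at h
        rw [h]; ring
      · have hx0' : 0 < x := lt_of_lt_of_le hp0 hxy
        have h := hs x hx (p / x) (by positivity) (by rw [div_le_one hx0']; exact hxy)
        rw [div_mul_cancel₀ _ (ne_of_gt hx0')] at h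
        field_simp at h ⊢
        nlinarith [h]
    · set t := min p (-x) with ht
      have ht0 : 0 < t := lt_min hp0 (by linarith)
      have htp : t / p ≤ 1 := by rw [div_le_one hp0]; exact min_le_left _ _
      have htI : t ∈ I := by
        have := hmem p hpI (t / p) (by positivity) htp
        rwa [div_mul_cancel₀ _ (ne_of_gt hp0)] at this
      have hxne : x ≠ 0 := ne_of_lt hx0
      have hnxne : (0:ℝ) < -x := by linarith
      have htx : t / (-x) ≤ 1 := by
        rw [div_le_one (by linarith)]; exact min_le_right _ _
      have he : t / (-x) * x = -t := by
        field_simp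
      have hntI : -t ∈ I := by
        have := hmem x hx (t / (-x)) (div_nonneg ht0.le hnxne.le) htx
        rwa [he] at this
      have hft : f t = f p / p * t := by
        have h := hs p hpI (t / p) (by positivity) htp
        rw [div_mul_cancel₀ _ (ne_of_gt hp0)] at h
        rw [h]; ring
      have hfnt : f (-t) = - f t := by
        have h := hadd t htI (-t) hntI (by simpa using h0)
        simp only [add_neg_cancel, hf0] at h
        linarith
      have h := hs x hx (t / (-x)) (div_nonneg ht0.le hnxne.le) htx
      rw [he] at h
      rw [hfnt, hft] at h
      field_simp [hxne, ne_of_gt hp0] at h ⊢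
      apply mul_left_cancel₀ ht0.ne'
      linear_combination t * h
  · push_neg at hp
    obtain ⟨p, hpI, hpne⟩ := hnt
    have hp0 : p < 0 := lt_of_le_of_ne (hp p hpI) hpne
    refine ⟨f p / p, ?_⟩
    intro x hx
    have hx0 : x ≤ 0 := hp x hx
    rcases le_total p x with hxy | hxy
    · have h := hs p hpI (x / p) (div_nonneg_of_nonpos hx0 hp0.le)
        (by rw [div_le_one_iff]; tauto)
      rw [div_mul_cancel₀ _ (ne_of_lt hp0)] at h
      rw [h]; ring
    · have hx0' : x < 0 := lt_of_le_of_lt hxy hp0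
      have h := hs x hx (p / x) (div_nonneg_of_nonpos hp0.le hx0'.le)
        (by rw [div_le_one_iff]; tauto)
      rw [div_mul_cancel₀ _ (ne_of_lt hx0')] at h
      field_simp [ne_of_lt hx0', ne_of_lt hp0] at h ⊢
      linear_combination -h



/-- If `f : I → ℝ` solves the restricted Cauchy equation and is
monotone on `I`, then `f(x) = c·x` on `I`. -/
theorem cauchy_interval_monotone (I : Set ℝ) (hI : I.OrdConnected)
    (h0 : (0 : ℝ) ∈ I) (hnt : ∃ x ∈ I, x ≠ 0) (f : ℝ → ℝ)
    (hadd : ∀ x ∈ I, ∀ x' ∈ I, x + x' ∈ I → f (x + x') = f x + f x')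
    (hmono : MonotoneOn f I ∨ AntitoneOn f I) :
    ∃ c : ℝ, ∀ x ∈ I, f x = c * x := by
  rcases hmono with hm | hm
  · exact aux_mono I hI h0 hnt f hadd hm
  · obtain ⟨c, hc⟩ := aux_mono I hI h0 hnt (-f)
      (fun x hx x' hx' hxx' => by simp [hadd x hx x' hx' hxx']; ring) hm.neg
    exact ⟨-c, fun x hx => by have := hc x hx; simp at this; linarith⟩
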